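/- Let θ ∈ ℝ and define g_θ : ℝ² → ℝ² by g_θ(x,y) = (−sin(θ)·x³ + cos(θ)·y³, −cos(θ)·x³ − sin(θ)·y³). Suppose V : ℝ² → ℝ is a differentiable function with V(x,y) > 0 and ⟨∇V(x,y), g_θ(x,y)⟩ < 0 for all (x,y) ≠ (0,0). Then the function W(x,y) := V(x,y) + V(y,−x) + V(−x,−y) + V(−y,x) satisfies: W(y,−x) = W(x,y) for all (x,y), W(x,y) > 0 for all (x,y) ≠ (0,0), and ⟨∇W(x,y), g_θ(x,y)⟩ < 0 for all (x,y) ≠ (0,0). -/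

import Mathlib

open RealInnerProductSpace Real

/-- The point `(x, y)` of the Euclidean plane `ℝ²`. -/
noncomputable def euclidPt (x y : ℝ) : EuclideanSpace ℝ (Fin 2) :=
  (WithLp.equiv 2 (Fin 2 → ℝ)).symm ![x, y]

lemma euclidPt_eta (p : EuclideanSpace ℝ (Fin 2)) : euclidPt (p 0) (p 1) = p := by
  ext i; fin_cases i <;> rfl

/-- Rotation by  -90°: `(x, y) ↦ (y, -x)`, as a continuous linear map. -/
noncomputable def rotT : EuclideanSpace ℝ (Fin 2) →L[ℝ] EuclideanSpace ℝ (Fin 2) :=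
  LinearMap.toContinuousLinearMap
  { toFun := fun p => euclidPt (p 1) (-(p 0))
    map_add' := by intro p q; ext i; fin_cases i <;> simp [euclidPt] <;> ring
    map_smul' := by intro c p; ext i; fin_cases i <;> simp [euclidPt] }

lemma rotT_apply (p : EuclideanSpace ℝ (Fin 2)) : rotT p = euclidPt (p 1) (-(p 0)) := rfl

lemma rotT_euclid (x y : ℝ) : rotT (euclidPt x y) = euclidPt y (-x) := rfl

lemma rotT_ne_zero {p : EuclideanSpace ℝ (Fin 2)} (hp : p ≠ 0) : rotT p ≠ 0 := by
  intro h
  apply hp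
  ext i
  have h0 : rotT p 0 = 0 := by rw [h]; rfl
  have h1 : rotT p 1 = 0 := by rw [h]; rfl
  have e0 : p 1 = 0 := h0
  have e1 : -(p 0) = 0 := h1
  fin_cases i
  · simpa using e1
  · simpa using e0

lemma inner_gradient (f : EuclideanSpace ℝ (Fin 2) → ℝ) (q v : EuclideanSpace ℝ (Fin 2)) :
    ⟪gradient f q, v⟫ = fderiv ℝ f q v := by
  simp [gradient, InnerProductSpace.toDual_symm_apply]

/-- Let `g_θ(x,y) = (−sin(θ)x³ + cos(θ)y³, −cos(θ)x³ − sin(θ)y³)` and let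
`V : ℝ² → ℝ` be differentiable with `V(x,y) > 0` and `⟨∇V(x,y), g_θ(x,y)⟩ < 0` for all
`(x,y) ≠ (0,0)`. Then `W(x,y) := V(x,y) + V(y,−x) + V(−x,−y) + V(−y,x)` satisfies
`W(y,−x) = W(x,y)`, `W(x,y) > 0` for `(x,y) ≠ (0,0)`, and `⟨∇W(x,y), g_θ(x,y)⟩ < 0` for
`(x,y) ≠ (0,0)`. -/
theorem symmetrized_lyapunov_function
    (θ : ℝ) (g : EuclideanSpace ℝ (Fin 2) → EuclideanSpace ℝ (Fin 2))
    (hg1 : ∀ p : EuclideanSpace ℝ (Fin 2), g p 0 = -sin θ * (p 0)^3 + cos θ * (p 1)^3)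
    (hg2 : ∀ p : EuclideanSpace ℝ (Fin 2), g p 1 = -cos θ * (p 0)^3 - sin θ * (p 1)^3)
    (V : EuclideanSpace ℝ (Fin 2) → ℝ) (hVdiff : Differentiable ℝ V)
    (hVpos : ∀ p : EuclideanSpace ℝ (Fin 2), p ≠ 0 → 0 < V p)
    (hVdec : ∀ p : EuclideanSpace ℝ (Fin 2), p ≠ 0 → ⟪gradient V p, g p⟫ < 0)
    (W : EuclideanSpace ℝ (Fin 2) → ℝ)
    (hW : ∀ x y : ℝ, W (euclidPt x y)
      = V (euclidPt x y) + V (euclidPt y (-x)) + V (euclidPt (-x) (-y)) + V (euclidPt (-y) x)) :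
    (∀ x y : ℝ, W (euclidPt y (-x)) = W (euclidPt x y)) ∧
    (∀ p : EuclideanSpace ℝ (Fin 2), p ≠ 0 → 0 < W p) ∧
    (∀ p : EuclideanSpace ℝ (Fin 2), p ≠ 0 → ⟪gradient W p, g p⟫ < 0) := by
  -- W as a composition with powers of rotT
  have hWfun : W = fun p => V p + V (rotT p) + V (rotT (rotT p)) + V (rotT (rotT (rotT p))) := by
    funext p
    conv_lhs => rw [← euclidPt_eta p, hW]
    rw [euclidPt_eta, show rotT p = euclidPt (p 1) (-(p 0)) from rfl,
        rotT_euclid, rotT_euclid, neg_neg]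
  -- equivariance of g
  have gequiv : ∀ p : EuclideanSpace ℝ (Fin 2), g (rotT p) = rotT (g p) := by
    intro p
    ext i
    fin_cases i
    · show g (rotT p) 0 = (euclidPt (g p 1) (-(g p 0))) 0
      rw [hg1, hg2]
      show _ = -cos θ * p 0 ^ 3 - sin θ * p 1 ^ 3
      rw [show rotT p 0 = p 1 from rfl, show rotT p 1 = -(p 0) from rfl]
      ring
    · show g (rotT p) 1 = (euclidPt (g p 1) (-(g p 0))) 1
      rw [hg2, hg1]
      show _ = -(-sin θ * p 0 ^ 3 + cos θ * p 1 ^ 3)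
      rw [show rotT p 0 = p 1 from rfl, show rotT p 1 = -(p 0) from rfl]
      ring
  refine ⟨?_, ?_, ?_⟩
  · intro x y
    rw [hW, hW]
    simp only [neg_neg]
    ring
  · intro p hp
    rw [hWfun]
    have h1 := rotT_ne_zero hp
    have h2 := rotT_ne_zero h1
    have h3 := rotT_ne_zero h2
    have := hVpos p hp
    have := hVpos _ h1
    have := hVpos _ h2
    have := hVpos _ h3
    positivity
  · intro p hp
    have h1 := rotT_ne_zero hp
    have h2 := rotT_ne_zero h1
    have h3 := rotT_ne_zero h2
    -- derivative of W
    have hd0 : HasFDerivAt V (fderiv ℝ V p) p := (hVdiff p).hasFDerivAt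
    have hd1 : HasFDerivAt (fun q => V (rotT q)) ((fderiv ℝ V (rotT p)).comp rotT) p :=
      (hVdiff _).hasFDerivAt.comp p rotT.hasFDerivAt
    have hd2 : HasFDerivAt (fun q => V (rotT (rotT q)))
        ((fderiv ℝ V (rotT (rotT p))).comp (rotT.comp rotT)) p := by
      have := (hVdiff _).hasFDerivAt.comp p (rotT.hasFDerivAt.comp p rotT.hasFDerivAt)
      exact this
    have hd3 : HasFDerivAt (fun q => V (rotT (rotT (rotT q))))
        ((fderiv ℝ V (rotT (rotT (rotT p)))).comp (rotT.comp (rotT.comp rotT))) p := by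
      have := (hVdiff _).hasFDerivAt.comp p
        (rotT.hasFDerivAt.comp p (rotT.hasFDerivAt.comp p rotT.hasFDerivAt))
      exact this
    have hWd : HasFDerivAt W (fderiv ℝ V p + (fderiv ℝ V (rotT p)).comp rotT
        + (fderiv ℝ V (rotT (rotT p))).comp (rotT.comp rotT)
        + (fderiv ℝ V (rotT (rotT (rotT p)))).comp (rotT.comp (rotT.comp rotT))) p := by
      rw [hWfun]
      exact ((hd0.add hd1).add hd2).add hd3
    rw [inner_gradient, hWd.fderiv]
    have e1 : fderiv ℝ V (rotT p) (rotT (g p)) = ⟪gradient V (rotT p), g (rotT p)⟫ := by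
      rw [inner_gradient, gequiv]
    have e2 : fderiv ℝ V (rotT (rotT p)) (rotT (rotT (g p)))
        = ⟪gradient V (rotT (rotT p)), g (rotT (rotT p))⟫ := by
      rw [inner_gradient, gequiv, gequiv]
    have e3 : fderiv ℝ V (rotT (rotT (rotT p))) (rotT (rotT (rotT (g p))))
        = ⟪gradient V (rotT (rotT (rotT p))), g (rotT (rotT (rotT p)))⟫ := by
      rw [inner_gradient, gequiv, gequiv, gequiv]
    have e0 : fderiv ℝ V p (g p) = ⟪gradient V p, g p⟫ := (inner_gradient V p (g p)).symm
    simp only [ContinuousLinearMap.add_apply, ContinuousLinearMap.comp_apply]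
    rw [e0, e1, e2, e3]
    have := hVdec p hp
    have := hVdec _ h1
    have := hVdec _ h2
    have := hVdec _ h3
    linarith
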